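/- Let G be a connected graph on n vertices whose complement has exactly c connected components. Then the multiplicity of n as an eigenvalue of the distance Laplacian D^L(G) equals c - 1. -/

import Mathlib

open Matrix

/-- The transmission of a vertex: sum of distances to all other vertices. -/
noncomputable def transmission {V : Type*} [Fintype V] (G : SimpleGraph V) (v : V) : ℕ :=
  ∑ u, G.dist v u

/-- The distance Laplacian matrix `D^L(G) = Diag(Tr) - D(G)`. -/
noncomputable def distLapMatrix {V : Type*} [Fintype V] [DecidableEq V]
    (G : SimpleGraph V) : Matrix V V ℝ :=
  fun u v => if u = v then (transmission G u : ℝ) else -(G.dist u v : ℝ)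

/-- `μ` is an eigenvalue of the real matrix `M`. -/
def IsEigenvalue {V : Type*} [Fintype V] [DecidableEq V] (M : Matrix V V ℝ) (μ : ℝ) : Prop :=
  Module.End.HasEigenvalue (Matrix.toLin' M) μ

/-- The multiplicity of `μ` as an eigenvalue of `M` (dimension of the eigenspace). -/
noncomputable def eigMult {V : Type*} [Fintype V] [DecidableEq V]
    (M : Matrix V V ℝ) (μ : ℝ) : ℕ :=
  Module.finrank ℝ (Module.End.eigenspace (Matrix.toLin' M) μ)

section Aux

variable {V : Type*} [Fintype V] [DecidableEq V]

lemma distLap_mulVec (G : SimpleGraph V) (x : V → ℝ) (u : V) :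
    (distLapMatrix G *ᵥ x) u = ∑ v, (G.dist u v : ℝ) * (x u - x v) := by
  have h1 : ∀ v : V, distLapMatrix G u v * x v
      = (if u = v then (transmission G u : ℝ) * x u else 0) - (G.dist u v : ℝ) * x v := by
    intro v
    unfold distLapMatrix
    split_ifs with h
    · subst h; simp [SimpleGraph.dist_self]
    · ring
  have h2 : (distLapMatrix G *ᵥ x) u = (transmission G u : ℝ) * x u - ∑ v, (G.dist u v : ℝ) * x v := by
    simp only [mulVec, dotProduct]
    rw [Finset.sum_congr rfl (fun v _ => h1 v), Finset.sum_sub_distrib,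
      Finset.sum_ite_eq Finset.univ u (fun _ => (transmission G u : ℝ) * x u)]
    simp
  rw [h2]
  have h3 : (transmission G u : ℝ) = ∑ v, (G.dist u v : ℝ) := by
    unfold transmission; push_cast; rfl
  rw [h3]
  rw [Finset.sum_mul, ← Finset.sum_sub_distrib]
  apply Finset.sum_congr rfl
  intro v _
  ring

omit [DecidableEq V] in
lemma swap_double_sum (f : V → V → ℝ) :
    ∑ u, ∑ v, f u v = ∑ u, ∑ v, f v u := Finset.sum_comm

end Aux

set_option maxHeartbeats 1000000 in
set_option synthInstance.maxHeartbeats 400000 in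
/-- For a connected graph `G` on `n` vertices whose complement has exactly `c` connected
components, the multiplicity of `n` as a distance Laplacian eigenvalue is `c - 1`. -/
theorem stmt_7 {V : Type*} [Fintype V] [DecidableEq V] (G : SimpleGraph V)
    (hG : G.Connected) (c : ℕ) (hc : Nat.card Gᶜ.ConnectedComponent = c) :
    eigMult (distLapMatrix G) (Fintype.card V : ℝ) = c - 1 := by
  classical
  have hne : Nonempty V := hG.nonempty
  have hcardpos : 0 < Fintype.card V := Fintype.card_pos
  set n : ℝ := (Fintype.card V : ℝ) with hn
  have hn0 : n ≠ 0 := by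
    simp only [hn, ne_eq, Nat.cast_eq_zero]
    omega
  -- the sum linear functional
  let σ : (V → ℝ) →ₗ[ℝ] ℝ :=
    { toFun := fun x => ∑ v, x v
      map_add' := by intro x y; simp [Finset.sum_add_distrib]
      map_smul' := by intro r x; simp [Finset.mul_sum] }
  set K : Submodule ℝ (V → ℝ) := LinearMap.ker (Matrix.toLin' (Gᶜ.lapMatrix ℝ)) with hK
  -- characterize the eigenspace
  have hE : Module.End.eigenspace (Matrix.toLin' (distLapMatrix G)) n = K ⊓ LinearMap.ker σ := by
    ext x
    rw [Module.End.mem_eigenspace_iff, Submodule.mem_inf, LinearMap.mem_ker, LinearMap.mem_ker]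
    have hKx : x ∈ K ↔ ∀ i j : V, Gᶜ.Adj i j → x i = x j := by
      rw [hK, LinearMap.mem_ker, Matrix.toLin'_apply, SimpleGraph.lapMatrix_mulVec_eq_zero_iff_forall_adj]
    constructor
    · intro hx
      have hpt : ∀ u, ∑ v, (G.dist u v : ℝ) * (x u - x v) = n * x u := by
        intro u
        have := congrFun hx u
        rw [Matrix.toLin'_apply] at this
        rw [← distLap_mulVec G x u, this]
        simp
      -- sum over all u is zero by antisymmetry
      have hanti : ∑ u, ∑ v, (G.dist u v : ℝ) * (x u - x v) = 0 := by
        have h1 : ∑ u, ∑ v, (G.dist u v : ℝ) * (x u - x v)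
            = ∑ u, ∑ v, (G.dist v u : ℝ) * (x v - x u) :=
          swap_double_sum _
        have h2 : ∑ u, ∑ v, ((G.dist v u : ℝ)) * (x v - x u)
            = - ∑ u, ∑ v, (G.dist u v : ℝ) * (x u - x v) := by
          rw [← Finset.sum_neg_distrib]
          apply Finset.sum_congr rfl; intro u _
          rw [← Finset.sum_neg_distrib]
          apply Finset.sum_congr rfl; intro v _
          rw [SimpleGraph.dist_comm]; ring
        have h3 := h1.trans h2
        linarith
      have hsum : ∑ v, x v = 0 := by
        have : n * ∑ u, x u = 0 := by
          rw [Finset.mul_sum, ← hanti]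
          exact Finset.sum_congr rfl (fun u _ => (hpt u).symm)
        exact (mul_eq_zero.mp this).resolve_left hn0
      -- quadratic form computation
      have hA : ∑ u, ∑ v, (G.dist u v : ℝ) * (x u * (x u - x v)) = n * ∑ u, (x u)^2 := by
        rw [Finset.mul_sum]
        apply Finset.sum_congr rfl
        intro u _
        have : ∑ v, (G.dist u v : ℝ) * (x u * (x u - x v))
            = x u * ∑ v, (G.dist u v : ℝ) * (x u - x v) := by
          rw [Finset.mul_sum]; apply Finset.sum_congr rfl; intro v _; ring
        rw [this, hpt u]; ring
      have hA' : ∑ u, ∑ v, (G.dist u v : ℝ) * (x v * (x v - x u)) = n * ∑ u, (x u)^2 := by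
        rw [← hA]
        rw [swap_double_sum (fun u v => (G.dist u v : ℝ) * (x v * (x v - x u)))]
        apply Finset.sum_congr rfl; intro u _
        apply Finset.sum_congr rfl; intro v _
        rw [SimpleGraph.dist_comm]
      have hQ : ∑ u, ∑ v, (G.dist u v : ℝ) * (x u - x v)^2 = 2 * n * ∑ u, (x u)^2 := by
        have : ∑ u, ∑ v, (G.dist u v : ℝ) * (x u - x v)^2
            = ∑ u, ∑ v, ((G.dist u v : ℝ) * (x u * (x u - x v))
              + (G.dist u v : ℝ) * (x v * (x v - x u))) := by
          apply Finset.sum_congr rfl; intro u _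
          apply Finset.sum_congr rfl; intro v _
          ring
        rw [this]
        simp only [Finset.sum_add_distrib]
        rw [hA, hA']; ring
      have hP : ∑ u, ∑ v, (x u - x v)^2 = 2 * n * ∑ u, (x u)^2 := by
        have huu : ∀ u : V, ∑ v, (x u - x v)^2
            = n * (x u)^2 - 2 * x u * (∑ v, x v) + ∑ v, (x v)^2 := by
          intro u
          have : ∀ v : V, (x u - x v)^2 = (x u)^2 - 2 * x u * x v + (x v)^2 := by
            intro v; ring
          rw [Finset.sum_congr rfl (fun v _ => this v)]
          rw [Finset.sum_add_distrib, Finset.sum_sub_distrib, Finset.sum_const,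
            Finset.card_univ, nsmul_eq_mul, ← Finset.mul_sum]
        rw [Finset.sum_congr rfl (fun u _ => huu u)]
        rw [hsum]
        simp only [mul_zero, zero_mul, sub_zero]
        rw [Finset.sum_add_distrib, ← Finset.mul_sum, Finset.sum_const, Finset.card_univ,
          nsmul_eq_mul]
        ring
      have hZ : ∑ u, ∑ v, ((G.dist u v : ℝ) - 1) * (x u - x v)^2 = 0 := by
        have : ∀ u v : V, ((G.dist u v : ℝ) - 1) * (x u - x v)^2
            = (G.dist u v : ℝ) * (x u - x v)^2 - (x u - x v)^2 := by
          intro u v; ring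
        simp only [Finset.sum_congr rfl (fun u _ => Finset.sum_congr rfl (fun v _ => this u v)),
          Finset.sum_sub_distrib]
        rw [hQ, hP]; ring
      have hgnn : ∀ u v : V, 0 ≤ ((G.dist u v : ℝ) - 1) * (x u - x v)^2 := by
        intro u v
        rcases eq_or_ne u v with h | h
        · subst h; simp
        · have h1 : 1 ≤ G.dist u v := hG.pos_dist_of_ne h
          have : (1 : ℝ) ≤ (G.dist u v : ℝ) := by exact_mod_cast h1
          have := sq_nonneg (x u - x v)
          nlinarith
      have hzero : ∀ u v : V, ((G.dist u v : ℝ) - 1) * (x u - x v)^2 = 0 := by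
        intro u v
        have houter := (Finset.sum_eq_zero_iff_of_nonneg
          (fun u _ => Finset.sum_nonneg (fun v _ => hgnn u v))).mp hZ u (Finset.mem_univ u)
        exact (Finset.sum_eq_zero_iff_of_nonneg
          (fun v _ => hgnn u v)).mp houter v (Finset.mem_univ v)
      refine ⟨hKx.mpr ?_, hsum⟩
      intro i j hij
      rw [SimpleGraph.compl_adj] at hij
      obtain ⟨hne', hnadj⟩ := hij
      have h1 : 1 ≤ G.dist i j := hG.pos_dist_of_ne hne'
      have h2 : G.dist i j ≠ 1 := by
        intro h; exact hnadj (SimpleGraph.dist_eq_one_iff_adj.mp h)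
      have h3 : 2 ≤ G.dist i j := by omega
      have h4 : (0 : ℝ) < (G.dist i j : ℝ) - 1 := by
        have : (2 : ℝ) ≤ (G.dist i j : ℝ) := by exact_mod_cast h3
        linarith
      have := hzero i j
      have h5 : (x i - x j)^2 = 0 := by
        rcases mul_eq_zero.mp this with h | h
        · exact absurd h h4.ne'
        · exact h
      have := pow_eq_zero_iff (n := 2) (by norm_num) |>.mp h5
      linarith [this]
    · rintro ⟨hxK, hxσ⟩
      have hadj : ∀ i j : V, Gᶜ.Adj i j → x i = x j := hKx.mp hxK
      ext u
      rw [Matrix.toLin'_apply, distLap_mulVec G x u]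
      have hterm : ∀ v : V, (G.dist u v : ℝ) * (x u - x v) = x u - x v := by
        intro v
        rcases eq_or_ne u v with h | h
        · subst h; simp
        · by_cases hA : G.Adj u v
          · rw [SimpleGraph.dist_eq_one_iff_adj.mpr hA]; norm_num
          · have : x u = x v := hadj u v (by rw [SimpleGraph.compl_adj]; exact ⟨h, hA⟩)
            rw [this]; ring
      rw [Finset.sum_congr rfl (fun v _ => hterm v), Finset.sum_sub_distrib,
        Finset.sum_const, Finset.card_univ, nsmul_eq_mul]
      have : ∑ v, x v = 0 := hxσ
      rw [this]
      simp [hn]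
  -- dimension count
  unfold eigMult
  rw [hE]
  have hfin : Module.finrank ℝ K = c := by
    rw [← hc, Nat.card_eq_fintype_card]
    exact (SimpleGraph.card_connectedComponent_eq_finrank_ker_toLin'_lapMatrix Gᶜ).symm
  set τ : K →ₗ[ℝ] ℝ := σ.comp K.subtype with hτ
  have hone : (fun _ => (1:ℝ)) ∈ K := by
    rw [hK, LinearMap.mem_ker, Matrix.toLin'_apply, SimpleGraph.lapMatrix_mulVec_eq_zero_iff_forall_adj]
    intro i j _; rfl
  have hrange : LinearMap.range τ = ⊤ := by
    rcases eq_bot_or_eq_top (LinearMap.range τ) with h | h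
    · exfalso
      have : τ ⟨_, hone⟩ = n := by
        simp [hτ, σ, hn, Finset.card_univ]
      have hmem : n ∈ LinearMap.range τ := ⟨⟨_, hone⟩, this⟩
      rw [h, Submodule.mem_bot] at hmem
      exact hn0 hmem
    · exact h
  have hrk := LinearMap.finrank_range_add_finrank_ker τ
  rw [hrange] at hrk
  have hrtop : Module.finrank ℝ (⊤ : Submodule ℝ ℝ) = 1 := by
    rw [finrank_top]; exact Module.finrank_self ℝ
  rw [hrtop, hfin] at hrk
  -- ker τ ≃ K ⊓ ker σ
  have hkerτ : LinearMap.ker τ = Submodule.comap K.subtype (K ⊓ LinearMap.ker σ) := by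
    rw [hτ, LinearMap.ker_comp, Submodule.comap_inf]
    rw [Submodule.comap_subtype_self]
    simp
  have hequiv : Module.finrank ℝ (K ⊓ LinearMap.ker σ : Submodule ℝ (V → ℝ))
      = Module.finrank ℝ (LinearMap.ker τ) := by
    rw [hkerτ]
    exact (Submodule.comapSubtypeEquivOfLe (inf_le_left : K ⊓ LinearMap.ker σ ≤ K)).finrank_eq.symm
  rw [hequiv]
  omega
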